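/- Let φ be a field automorphism of a field F with fixed field K, and let L = f_0·id + f_1·φ + ... + f_k·φ^k be a nonzero linear operator on F with coefficients f_i ∈ F and f_k ≠ 0 (degree k). Then the kernel of L, as a K-vector subspace of F, has dimension at most k. -/

import Mathlib

/-- The fixed subfield of a field automorphism. -/
def fixedSubfield {F : Type*} [Field F] (e : F ≃+* F) : Subfield F where
  carrier := {a | e a = a}
  mul_mem' := by intro a b ha hb; simp only [Set.mem_setOf_eq, map_mul] at *; rw [ha, hb]
  one_mem' := by simp
  add_mem' := by intro a b ha hb; simp only [Set.mem_setOf_eq, map_add] at *; rw [ha, hb]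
  zero_mem' := by simp
  neg_mem' := by intro a ha; simp only [Set.mem_setOf_eq, map_neg] at *; rw [ha]
  inv_mem' := by intro a ha; simp only [Set.mem_setOf_eq, map_inv₀] at *; rw [ha]

section Aux

/-- Rank of kernel of a composition is at most the sum of ranks of kernels. -/
lemma aux_rank_ker_comp_le {K V : Type*} [DivisionRing K] [AddCommGroup V] [Module K V]
    (f g : V →ₗ[K] V) :
    Module.rank K (LinearMap.ker (f ∘ₗ g)) ≤
      Module.rank K (LinearMap.ker f) + Module.rank K (LinearMap.ker g) := by
  have hmaps : ∀ x ∈ LinearMap.ker (f ∘ₗ g), g x ∈ LinearMap.ker f := fun x hx => by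
    simpa [LinearMap.mem_ker] using hx
  let h : LinearMap.ker (f ∘ₗ g) →ₗ[K] LinearMap.ker f := g.restrict hmaps
  have h1 := LinearMap.rank_range_add_rank_ker h
  rw [← h1]
  refine add_le_add (Submodule.rank_le _) ?_
  -- ker h embeds into ker g
  have hj : ∀ x : LinearMap.ker h, g ((x : LinearMap.ker (f ∘ₗ g)) : V) = 0 := by
    intro x
    have := x.2
    rw [LinearMap.mem_ker] at this
    exact congrArg Subtype.val this
  let ι : LinearMap.ker h →ₗ[K] V :=
    (LinearMap.ker (f ∘ₗ g)).subtype.comp (LinearMap.ker h).subtype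
  let j : LinearMap.ker h →ₗ[K] LinearMap.ker g :=
    ι.codRestrict (LinearMap.ker g) (fun x => by simpa [ι, LinearMap.mem_ker] using hj x)
  have hinj : Function.Injective j := by
    intro a b hab
    have h2 := congrArg (fun y : LinearMap.ker g => (y : V)) hab
    have h3 : ((a : LinearMap.ker (f ∘ₗ g)) : V) = ((b : LinearMap.ker (f ∘ₗ g)) : V) := h2
    exact Subtype.ext (Subtype.ext h3)
  exact LinearMap.rank_le_of_injective j hinj

variable {F : Type*} [Field F] (e : F ≃+* F)

/-- e as a linear map over the fixed subfield. -/
def phiLin : F →ₗ[fixedSubfield e] F where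
  toFun := e
  map_add' := map_add e
  map_smul' := fun c x => by
    show e ((c : F) * x) = (c : F) * e x
    rw [map_mul, c.2]

lemma myIterSub (n : ℕ) (a b : F) :
    (⇑e)^[n] (a - b) = (⇑e)^[n] a - (⇑e)^[n] b := by
  induction n with
  | zero => rfl
  | succ n ih => simp [Function.iterate_succ_apply', ih, map_sub]

lemma myIterMul (n : ℕ) (a b : F) :
    (⇑e)^[n] (a * b) = (⇑e)^[n] a * (⇑e)^[n] b := by
  induction n with
  | zero => rfl
  | succ n ih => simp [Function.iterate_succ_apply', ih, map_mul]

lemma iterate_ne_zero (n : ℕ) {a : F} (ha : a ≠ 0) : (⇑e)^[n] a ≠ 0 := by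
  induction n with
  | zero => exact ha
  | succ n ih =>
    rw [Function.iterate_succ_apply']
    simpa using ih

/-- The operator Σ_{i≤k} f i · φ^i. -/
noncomputable def opT (f : ℕ → F) (k : ℕ) : F →ₗ[fixedSubfield e] F :=
  ∑ i ∈ Finset.range (k + 1), (LinearMap.mulLeft (fixedSubfield e) (f i)) ∘ₗ (phiLin e) ^ i

lemma opT_apply (f : ℕ → F) (k : ℕ) (g : F) :
    opT e f k g = ∑ i ∈ Finset.range (k + 1), f i * (⇑e)^[i] g := by
  rw [opT, LinearMap.sum_apply]
  refine Finset.sum_congr rfl fun i _ => ?_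
  rw [LinearMap.comp_apply, LinearMap.mulLeft_apply, Module.End.pow_apply]
  rfl

lemma key_identity (c : ℕ → F) (n : ℕ)
    (h0 : ∑ i ∈ Finset.range (n + 1), c i = 0) (h : F) :
    ∑ i ∈ Finset.range (n + 1), c i * (⇑e)^[i] h =
      ∑ j ∈ Finset.range n, (∑ i ∈ Finset.Ico (j + 1) (n + 1), c i) * (⇑e)^[j] (e h - h) := by
  have step1 : ∑ i ∈ Finset.range (n + 1), c i * (⇑e)^[i] h
      = ∑ i ∈ Finset.range (n + 1), c i * ((⇑e)^[i] h - h) := by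
    have : ∑ i ∈ Finset.range (n + 1), c i * (⇑e)^[i] h
        = ∑ i ∈ Finset.range (n + 1), (c i * ((⇑e)^[i] h - h) + c i * h) := by
      refine Finset.sum_congr rfl fun i _ => by ring
    rw [this, Finset.sum_add_distrib, ← Finset.sum_mul, h0, zero_mul, add_zero]
  rw [step1]
  have tele : ∀ i, (⇑e)^[i] h - h = ∑ j ∈ Finset.range i, ((⇑e)^[j+1] h - (⇑e)^[j] h) :=
    fun i => (Finset.sum_range_sub (fun j => (⇑e)^[j] h) i).symm
  have step2 : ∑ i ∈ Finset.range (n + 1), c i * ((⇑e)^[i] h - h)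
      = ∑ i ∈ Finset.range (n + 1), ∑ j ∈ Finset.range i,
          c i * ((⇑e)^[j+1] h - (⇑e)^[j] h) := by
    refine Finset.sum_congr rfl fun i _ => by rw [tele i, Finset.mul_sum]
  rw [step2]
  have comm := Finset.sum_Ico_Ico_comm' 0 (n + 1)
      (fun j i => c i * ((⇑e)^[j+1] h - (⇑e)^[j] h))
  simp only [← Finset.range_eq_Ico] at comm
  rw [← comm]
  rw [Finset.sum_range_succ]
  simp only [Finset.Ico_self, Finset.sum_empty, add_zero]
  refine Finset.sum_congr rfl fun j hj => ?_
  rw [Finset.sum_mul]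
  refine Finset.sum_congr rfl fun i _ => ?_
  rw [myIterSub, ← Function.iterate_succ_apply]

lemma rank_ker_sub_phiLin :
    Module.rank (fixedSubfield e) (LinearMap.ker (phiLin e - LinearMap.id)) ≤ 1 := by
  have hle : LinearMap.ker (phiLin e - LinearMap.id) ≤
      Submodule.span (fixedSubfield e) ({1} : Set F) := by
    intro x hx
    rw [LinearMap.mem_ker, LinearMap.sub_apply, LinearMap.id_apply, sub_eq_zero] at hx
    have hxK : x ∈ fixedSubfield e := hx
    have : x = (⟨x, hxK⟩ : fixedSubfield e) • (1 : F) := by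
      show x = x * 1
      rw [mul_one]
    rw [this]
    exact Submodule.smul_mem _ _ (Submodule.subset_span rfl)
  calc Module.rank (fixedSubfield e) (LinearMap.ker (phiLin e - LinearMap.id))
      ≤ Module.rank (fixedSubfield e) (Submodule.span (fixedSubfield e) ({1} : Set F)) :=
        Submodule.rank_mono hle
    _ ≤ Cardinal.mk ({1} : Set F) := rank_span_le _
    _ ≤ 1 := le_of_eq (Cardinal.mk_singleton _)

set_option maxHeartbeats 1000000 in
lemma main_aux : ∀ (k : ℕ) (f : ℕ → F), f k ≠ 0 →
    Module.rank (fixedSubfield e) (LinearMap.ker (opT e f k)) ≤ (k : Cardinal) := by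
  intro k
  induction k with
  | zero =>
    intro f hf
    have hbot : LinearMap.ker (opT e f 0) = ⊥ := by
      rw [LinearMap.ker_eq_bot']
      intro g hg
      rw [opT_apply] at hg
      simp only [zero_add, Finset.range_one, Finset.sum_singleton, Function.iterate_zero, id_eq] at hg
      exact (mul_eq_zero.mp hg).resolve_left hf
    rw [hbot, rank_bot]
    exact zero_le
  | succ k ih =>
    intro f hf
    by_cases hbot : LinearMap.ker (opT e f (k + 1)) = ⊥
    · rw [hbot, rank_bot]
      exact zero_le
    · obtain ⟨g, hgker, hg0⟩ := Submodule.exists_mem_ne_zero_of_ne_bot hbot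
      set c : ℕ → F := fun i => f i * (⇑e)^[i] g with hc
      have hsum : ∑ i ∈ Finset.range (k + 2), c i = 0 := by
        have := hgker
        rw [LinearMap.mem_ker, opT_apply] at this
        exact this
      set d : ℕ → F := fun j => ∑ i ∈ Finset.Ico (j + 1) (k + 2), c i with hd
      have hdk : d k ≠ 0 := by
        have hdkc : d k = c (k + 1) := by
          show (∑ i ∈ Finset.Ico (k + 1) (k + 2), c i) = c (k + 1)
          rw [Nat.Ico_succ_singleton, Finset.sum_singleton]
        rw [hdkc, hc]
        exact mul_ne_zero hf (iterate_ne_zero e (k + 1) hg0)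
      -- opT e c (k+1) = opT e d k ∘ (phiLin - id)
      have hfact : opT e c (k + 1) = (opT e d k) ∘ₗ (phiLin e - LinearMap.id) := by
        apply LinearMap.ext
        intro h
        rw [LinearMap.comp_apply, opT_apply, opT_apply]
        have := key_identity e c (k + 1) hsum h
        rw [this]
        refine Finset.sum_congr rfl fun j _ => ?_
        rfl
      -- opT e c (k+1) = opT e f (k+1) ∘ mulLeft g
      have hcomp : opT e c (k + 1) =
          (opT e f (k + 1)) ∘ₗ (LinearMap.mulLeft (fixedSubfield e) g) := by
        apply LinearMap.ext
        intro h
        rw [LinearMap.comp_apply, opT_apply, opT_apply, LinearMap.mulLeft_apply]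
        refine Finset.sum_congr rfl fun i _ => ?_
        rw [hc]
        rw [myIterMul]
        ring
      -- mul by g is a linear equivalence
      let mulgE : F ≃ₗ[fixedSubfield e] F :=
        LinearEquiv.ofLinear (LinearMap.mulLeft (fixedSubfield e) g)
          (LinearMap.mulLeft (fixedSubfield e) g⁻¹)
          (by apply LinearMap.ext; intro x
              show g * (g⁻¹ * x) = x
              rw [← mul_assoc, mul_inv_cancel₀ hg0, one_mul])
          (by apply LinearMap.ext; intro x
              show g⁻¹ * (g * x) = x
              rw [← mul_assoc, inv_mul_cancel₀ hg0, one_mul])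
      have hker : LinearMap.ker (opT e c (k + 1)) =
          Submodule.comap (mulgE : F →ₗ[fixedSubfield e] F)
            (LinearMap.ker (opT e f (k + 1))) := by
        rw [hcomp, LinearMap.ker_comp]
        rfl
      have hrankeq : Module.rank (fixedSubfield e) (LinearMap.ker (opT e f (k + 1)))
          = Module.rank (fixedSubfield e) (LinearMap.ker (opT e c (k + 1))) := by
        rw [hker, Submodule.comap_equiv_eq_map_symm]
        exact LinearEquiv.rank_eq (mulgE.symm.submoduleMap _)
      rw [hrankeq, hfact]
      calc Module.rank (fixedSubfield e)
            (LinearMap.ker ((opT e d k) ∘ₗ (phiLin e - LinearMap.id)))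
          ≤ Module.rank (fixedSubfield e) (LinearMap.ker (opT e d k)) +
            Module.rank (fixedSubfield e) (LinearMap.ker (phiLin e - LinearMap.id)) :=
            aux_rank_ker_comp_le _ _
        _ ≤ (k : Cardinal) + 1 := add_le_add (ih d hdk) (rank_ker_sub_phiLin e)
        _ = ((k + 1 : ℕ) : Cardinal) := by push_cast; ring

end Aux

/-- A nonzero operator L = Σ_{i=0}^k f_i φ^i of degree k (f_k ≠ 0) on F has
kernel of dimension at most k over the fixed field K of φ. -/
theorem stmt_10 (F : Type*) [Field F] (e : F ≃+* F) (k : ℕ) (f : ℕ → F)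
    (hfk : f k ≠ 0)
    (L : F →ₗ[fixedSubfield e] F)
    (hL : ∀ g : F, L g = ∑ i ∈ Finset.range (k + 1), f i * (⇑e)^[i] g) :
    Module.rank (fixedSubfield e) (LinearMap.ker L) ≤ (k : Cardinal) := by
  have : L = opT e f k := by
    apply LinearMap.ext
    intro g
    rw [hL g, opT_apply]
  rw [this]
  exact main_aux e k f hfk
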